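/- The translation (·)_λ from Λ⊕ to the pure λ-calculus, sending M ⊕ N to z (M)_λ (N)_λ for a fixed fresh variable z, is a sound and complete simulation of β_v-reduction: (1) M →_{β_v} N implies (M)_λ →_{β_v} (N)_λ; (2) if (M)_λ →_{β_v} Q then there is a unique N with Q = (N)_λ and M →_{β_v} N. -/
import Mathlib

open scoped NNReal ENNReal

/-- A (raw) multidistribution on `X`: a finite multiset of weighted elements. -/
abbrev MDist (X : Type) := Multiset (ℝ≥0 × X)

namespace MDist

/-- Scalar multiplication of a multidistribution. -/
def scale {X : Type} (p : ℝ≥0) (m : MDist X) : MDist X :=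
  m.map fun q => (p * q.1, q.2)

/-- The singleton multidistribution `[1 M]`. -/
def single {X : Type} (M : X) : MDist X := {(1, M)}

/-- A multidistribution is proper when every weight lies in `(0,1]` and the
weights sum to at most `1`. -/
def Proper {X : Type} (m : MDist X) : Prop :=
  (∀ q ∈ m, 0 < q.1 ∧ q.1 ≤ 1) ∧ (m.map Prod.fst).sum ≤ 1

/-- The probability that the distribution associated to a multidistribution
assigns to an event `A`. -/
noncomputable def mass {X : Type} (m : MDist X) (A : Set X) : ℝ≥0∞ :=
  (m.map fun q => A.indicator (fun _ => (q.1 : ℝ≥0∞)) q.2).sum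

end MDist

/-- One component of the lifting: either keep the term or perform a step. -/
def LiftTerm {X : Type} (r : X → MDist X → Prop) (M : X) (m : MDist X) : Prop :=
  m = MDist.single M ∨ r M m

/-- The lifting of a relation `r ⊆ X × MDist X` to a binary relation on
multidistributions. -/
inductive Lift {X : Type} (r : X → MDist X → Prop) : MDist X → MDist X → Prop
  | nil : Lift r 0 0
  | cons {p : ℝ≥0} {M : X} {m s t : MDist X} :
      LiftTerm r M m → Lift r s t → Lift r ((p, M) ::ₘ s) (MDist.scale p m + t)
/-- Terms of `Λ⊕` (de Bruijn representation). -/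
inductive Term : Type
  | var : ℕ → Term
  | lam : Term → Term
  | app : Term → Term → Term
  | choice : Term → Term → Term
deriving DecidableEq

namespace Term

/-- Shifting of de Bruijn indices above a cutoff. -/
def liftAux (c : ℕ) : Term → Term
  | var k => if k < c then var k else var (k + 1)
  | lam M => lam (liftAux (c + 1) M)
  | app M N => app (liftAux c M) (liftAux c N)
  | choice M N => choice (liftAux c M) (liftAux c N)

/-- Capture-avoiding substitution `M[N/j]`. -/
def subst : Term → ℕ → Term → Term
  | var k, j, N => if k = j then N else if j < k then var (k - 1) else var k
  | lam M, j, N => lam (subst M (j + 1) (liftAux 0 N))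
  | app M P, j, N => app (subst M j N) (subst P j N)
  | choice M P, j, N => choice (subst M j N) (subst P j N)

/-- Values: variables and abstractions. -/
inductive IsValue : Term → Prop
  | var (n : ℕ) : IsValue (var n)
  | lam (M : Term) : IsValue (lam M)

/-- `β_v`-reduction, closed under arbitrary contexts. -/
inductive BetaStep : Term → Term → Prop
  | beta {M V : Term} : IsValue V → BetaStep (app (lam M) V) (subst M 0 V)
  | appL {M M' N : Term} : BetaStep M M' → BetaStep (app M N) (app M' N)
  | appR {M N N' : Term} : BetaStep N N' → BetaStep (app M N) (app M N')
  | lam {M M' : Term} : BetaStep M M' → BetaStep (lam M) (lam M')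
  | chL {M M' N : Term} : BetaStep M M' → BetaStep (choice M N) (choice M' N)
  | chR {M N N' : Term} : BetaStep N N' → BetaStep (choice M N) (choice M N')

/-- Surface `β_v`-reduction: closure under surface contexts `S ::= □ | MS | SM`. -/
inductive SurfBetaStep : Term → Term → Prop
  | beta {M V : Term} : IsValue V → SurfBetaStep (app (lam M) V) (subst M 0 V)
  | appL {M M' N : Term} : SurfBetaStep M M' → SurfBetaStep (app M N) (app M' N)
  | appR {M N N' : Term} : SurfBetaStep N N' → SurfBetaStep (app M N) (app M N')

/-- `PlusStep M A B` holds when `M = S(P ⊕ Q)`, `A = S(P)`, `B = S(Q)` for a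
surface context `S ::= □ | MS | SM`. -/
inductive PlusStep : Term → Term → Term → Prop
  | choice {M N : Term} : PlusStep (choice M N) M N
  | appL {M A B N : Term} : PlusStep M A B → PlusStep (app M N) (app A N) (app B N)
  | appR {M N A B : Term} : PlusStep N A B → PlusStep (app M N) (app M A) (app M B)

end Term

open Term

/-- The reduction `→_{β_v} ⊆ Λ⊕ × MDST(Λ⊕)`. -/
def betaRed (M : Term) (m : MDist Term) : Prop :=
  ∃ N, BetaStep M N ∧ m = MDist.single N

/-- The probabilistic reduction `→_⊕ ⊆ Λ⊕ × MDST(Λ⊕)`. -/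
def plusRed (M : Term) (m : MDist Term) : Prop :=
  ∃ A B, PlusStep M A B ∧ m = {((1 : ℝ≥0) / 2, A), ((1 : ℝ≥0) / 2, B)}

/-- The full reduction `→ = →_{β_v} ∪ →_⊕`. -/
def red (M : Term) (m : MDist Term) : Prop := betaRed M m ∨ plusRed M m

/-- Surface reduction `→ₛ`: β_v and ⊕ rules closed under surface contexts. -/
def surfRed (M : Term) (m : MDist Term) : Prop :=
  (∃ N, SurfBetaStep M N ∧ m = MDist.single N) ∨ plusRed M m

/-- A step is deep when it is not a surface step. -/
def deepRed (M : Term) (m : MDist Term) : Prop := red M m ∧ ¬ surfRed M m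

/-- Pure λ-terms, together with a fixed fresh (globally free) variable `z`
used by no term of the image of the translation except at `⊕`. -/
inductive PTerm : Type
  | var : ℕ → PTerm
  | z : PTerm
  | lam : PTerm → PTerm
  | app : PTerm → PTerm → PTerm
deriving DecidableEq

namespace PTerm

def liftAux (c : ℕ) : PTerm → PTerm
  | var k => if k < c then var k else var (k + 1)
  | z => z
  | lam M => lam (liftAux (c + 1) M)
  | app M N => app (liftAux c M) (liftAux c N)

def subst : PTerm → ℕ → PTerm → PTerm
  | var k, j, N => if k = j then N else if j < k then var (k - 1) else var k
  | z, _, _ => z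
  | lam M, j, N => lam (subst M (j + 1) (liftAux 0 N))
  | app M P, j, N => app (subst M j N) (subst P j N)

/-- Values of the pure CbV λ-calculus: variables and abstractions. -/
inductive IsValue : PTerm → Prop
  | var (n : ℕ) : IsValue (var n)
  | z : IsValue z
  | lam (M : PTerm) : IsValue (lam M)

/-- CbV β-reduction on pure λ-terms, closed under arbitrary contexts. -/
inductive BetaStep : PTerm → PTerm → Prop
  | beta {M V : PTerm} : IsValue V → BetaStep (app (lam M) V) (subst M 0 V)
  | appL {M M' N : PTerm} : BetaStep M M' → BetaStep (app M N) (app M' N)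
  | appR {M N N' : PTerm} : BetaStep N N' → BetaStep (app M N) (app M N')
  | lam {M M' : PTerm} : BetaStep M M' → BetaStep (lam M) (lam M')

end PTerm

/-- The translation `(·)_λ : Λ⊕ → Λ`, sending `M ⊕ N` to `z (M)_λ (N)_λ`. -/
def trL : Term → PTerm
  | Term.var k => PTerm.var k
  | Term.lam M => PTerm.lam (trL M)
  | Term.app M N => PTerm.app (trL M) (trL N)
  | Term.choice M N => PTerm.app (PTerm.app PTerm.z (trL M)) (trL N)

lemma trL_liftAux (c : ℕ) (M : Term) :
    trL (Term.liftAux c M) = PTerm.liftAux c (trL M) := by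
  induction M generalizing c with
  | var k => simp [Term.liftAux, PTerm.liftAux, trL]; split <;> simp [trL]
  | lam M ih => simp [Term.liftAux, PTerm.liftAux, trL, ih]
  | app M N ihM ihN => simp [Term.liftAux, PTerm.liftAux, trL, ihM, ihN]
  | choice M N ihM ihN => simp [Term.liftAux, PTerm.liftAux, trL, ihM, ihN]

lemma trL_subst (M : Term) (j : ℕ) (N : Term) :
    trL (Term.subst M j N) = PTerm.subst (trL M) j (trL N) := by
  induction M generalizing j N with
  | var k =>
    simp only [Term.subst, trL, PTerm.subst]
    split
    · rfl
    · split <;> simp [trL]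
  | lam M ih => simp [Term.subst, trL, PTerm.subst, ih, trL_liftAux]
  | app M P ihM ihP => simp [Term.subst, trL, PTerm.subst, ihM, ihP]
  | choice M P ihM ihP => simp [Term.subst, trL, PTerm.subst, ihM, ihP]

lemma trL_ne_z (M : Term) : trL M ≠ PTerm.z := by cases M <;> simp [trL]

lemma trL_ne_appz (M : Term) (X : PTerm) : trL M ≠ PTerm.app PTerm.z X := by
  cases M <;> simp [trL]
  exact fun h _ => trL_ne_z _ h

lemma trL_inj : ∀ M N : Term, trL M = trL N → M = N := by
  intro M
  induction M with
  | var k => intro N h; cases N <;> simp [trL] at h ⊢ <;> simp [h]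
  | lam M ih =>
    intro N h; cases N <;> simp [trL] at h ⊢; exact ih _ h
  | app M P ihM ihP =>
    intro N h; cases N <;> simp [trL] at h ⊢
    · exact ⟨ihM _ h.1, ihP _ h.2⟩
    · exact absurd h.1 (trL_ne_appz _ _)
  | choice M P ihM ihP =>
    intro N h; cases N <;> simp [trL] at h ⊢
    · exact absurd h.1.symm (trL_ne_appz _ _)
    · exact ⟨ihM _ h.1, ihP _ h.2⟩

lemma trL_lam_inv {M : Term} {P : PTerm} (h : trL M = PTerm.lam P) :
    ∃ M0, M = Term.lam M0 ∧ trL M0 = P := by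
  cases M <;> simp [trL] at h
  exact ⟨_, rfl, h⟩

lemma trL_value_inv {M : Term} (h : PTerm.IsValue (trL M)) : Term.IsValue M := by
  cases M <;> simp [trL] at h <;> first
    | exact Term.IsValue.var _
    | exact Term.IsValue.lam _
    | cases h

lemma trL_forward : ∀ M N : Term, Term.BetaStep M N →
    PTerm.BetaStep (trL M) (trL N) := by
  intro M N h
  induction h with
  | @beta M V hV =>
    rw [trL_subst]
    refine PTerm.BetaStep.beta ?_
    cases hV with
    | var n => exact PTerm.IsValue.var n
    | lam M => exact PTerm.IsValue.lam _
  | appL _ ih => exact PTerm.BetaStep.appL ih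
  | appR _ ih => exact PTerm.BetaStep.appR ih
  | lam _ ih => exact PTerm.BetaStep.lam ih
  | chL _ ih => exact PTerm.BetaStep.appL (PTerm.BetaStep.appR ih)
  | chR _ ih => exact PTerm.BetaStep.appR ih

lemma trL_backward : ∀ (M : Term) (Q : PTerm), PTerm.BetaStep (trL M) Q →
    ∃ N, Q = trL N ∧ Term.BetaStep M N := by
  intro M
  induction M with
  | var k => intro Q h; rw [trL] at h; cases h
  | lam M ih =>
    intro Q h; rw [trL] at h
    cases h with
    | lam h' =>
      obtain ⟨N, rfl, hs⟩ := ih _ h'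
      exact ⟨Term.lam N, rfl, Term.BetaStep.lam hs⟩
  | app M N ihM ihN =>
    intro Q h; rw [trL] at h
    generalize hM : trL M = tM at h
    cases h with
    | beta hV =>
      obtain ⟨M0, rfl, rfl⟩ := trL_lam_inv hM
      exact ⟨Term.subst M0 0 N, (trL_subst _ _ _).symm,
        Term.BetaStep.beta (trL_value_inv hV)⟩
    | appL h' =>
      obtain ⟨N', rfl, hs⟩ := ihM _ (hM ▸ h')
      exact ⟨Term.app N' N, rfl, Term.BetaStep.appL hs⟩
    | appR h' =>
      obtain ⟨N', rfl, hs⟩ := ihN _ h'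
      exact ⟨Term.app M N', hM ▸ rfl, Term.BetaStep.appR hs⟩
  | choice M N ihM ihN =>
    intro Q h; rw [trL] at h
    cases h with
    | appL h' =>
      cases h' with
      | appL h'' => cases h''
      | appR h'' =>
        obtain ⟨N', rfl, hs⟩ := ihM _ h''
        exact ⟨Term.choice N' N, rfl, Term.BetaStep.chL hs⟩
    | appR h' =>
      obtain ⟨N', rfl, hs⟩ := ihN _ h'
      exact ⟨Term.choice M N', rfl, Term.BetaStep.chR hs⟩

/-- Simulation: the translation `(·)_λ` is sound and complete for
β_v-reduction. -/
theorem translation_simulation :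
    (∀ M N : Term, Term.BetaStep M N → PTerm.BetaStep (trL M) (trL N)) ∧
    (∀ (M : Term) (Q : PTerm), PTerm.BetaStep (trL M) Q →
      ∃! N : Term, Q = trL N ∧ Term.BetaStep M N) := by
  refine ⟨trL_forward, fun M Q h => ?_⟩
  obtain ⟨N, rfl, hs⟩ := trL_backward M Q h
  exact ⟨N, ⟨rfl, hs⟩, fun N' ⟨hN', _⟩ => (trL_inj _ _ hN').symm⟩
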